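/- If the constraint 4 M_φ Δt (2/(Δx)² + L) ≤ 1 holds, where L bounds the Lipschitz constant on [0,1] of the reaction term f(φ) = 4g(φ)φ(1-φ)(φ-1/2+β) with f(0)=f(1)=0, then the explicit finite-difference scheme for the modified Allen-Cahn equation preserves the invariant interval: 0 ≤ φ_{i,j}^n ≤ 1 for all (i,j) implies 0 ≤ φ_{i,j}^{n+1} ≤ 1. -/
import Mathlib


/-- Invariant interval `[0,1]` for the explicit finite-difference scheme for
the modified Allen–Cahn equation, under the stability constraint
`4 M_φ Δt (2/Δx² + L) ≤ 1`. -/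
theorem allen_cahn_scheme_invariant_interval
    (Mφ Δt Δx β L : ℝ) (hM : 0 < Mφ) (hΔt : 0 < Δt) (hΔx : 0 < Δx) (hL : 0 ≤ L)
    (g f : ℝ → ℝ) (hg : ContinuousOn g (Set.Icc 0 1))
    (hf : ∀ φ, f φ = 4 * g φ * φ * (1 - φ) * (φ - 1/2 + β))
    (hf0 : f 0 = 0) (hf1 : f 1 = 0)
    (hlip : LipschitzOnWith (Real.toNNReal L) f (Set.Icc 0 1))
    (hstab : 4 * Mφ * Δt * (2 / Δx^2 + L) ≤ 1)
    (φ φ' : ℤ → ℤ → ℝ)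
    (h01 : ∀ i j, φ i j ∈ Set.Icc (0:ℝ) 1)
    (hscheme : ∀ i j, φ' i j = φ i j + Mφ * Δt *
      ((φ (i+1) j + φ (i-1) j + φ i (j+1) + φ i (j-1) - 4 * φ i j) / Δx^2
        + f (φ i j))) :
    ∀ i j, φ' i j ∈ Set.Icc (0:ℝ) 1 := by
  intro i j
  have hc : 0 < Mφ * Δt := mul_pos hM hΔt
  have hd : 0 < Δx ^ 2 := by positivity
  have he : 0 < (Δx ^ 2)⁻¹ := inv_pos.mpr hd
  have hce : 0 < Mφ * Δt * (Δx ^ 2)⁻¹ := mul_pos hc he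
  have hLc : (Real.toNNReal L : ℝ) = L := Real.coe_toNNReal L hL
  have h0m : (0 : ℝ) ∈ Set.Icc (0:ℝ) 1 := by constructor <;> norm_num
  have h1m : (1 : ℝ) ∈ Set.Icc (0:ℝ) 1 := by constructor <;> norm_num
  set a := φ i j with ha
  obtain ⟨ha0, ha1⟩ := h01 i j
  have hb0 := hlip.dist_le_mul a (h01 i j) 0 h0m
  have hb1 := hlip.dist_le_mul a (h01 i j) 1 h1m
  rw [hf0, Real.dist_eq, Real.dist_eq, sub_zero, sub_zero, abs_of_nonneg ha0, hLc] at hb0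
  rw [hf1, Real.dist_eq, Real.dist_eq, sub_zero, hLc] at hb1
  have habs1 : |a - 1| = 1 - a := by rw [abs_of_nonpos (by linarith)]; ring
  rw [habs1] at hb1
  have hfl : -(L * a) ≤ f a := by have := (abs_le.mp hb0).1; linarith
  have hfu : f a ≤ L * (1 - a) := (abs_le.mp hb1).2
  -- stability key: Mφ*Δt*(4*e + L) ≤ 1
  have hcL : 0 ≤ Mφ * Δt * L := mul_nonneg hc.le hL
  have hstab' : Mφ * Δt * (4 * (Δx ^ 2)⁻¹) + Mφ * Δt * L ≤ 1 := by
    rw [div_eq_mul_inv] at hstab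
    nlinarith [hce, hcL]
  -- neighbor sum
  set S := φ (i+1) j + φ (i-1) j + φ i (j+1) + φ i (j-1) with hS
  have hS0 : 0 ≤ S := by
    have := (h01 (i+1) j).1; have := (h01 (i-1) j).1
    have := (h01 i (j+1)).1; have := (h01 i (j-1)).1
    simp only [hS]; linarith
  have hS4 : S ≤ 4 := by
    have := (h01 (i+1) j).2; have := (h01 (i-1) j).2
    have := (h01 i (j+1)).2; have := (h01 i (j-1)).2
    simp only [hS]; linarith
  have hval : φ' i j = a + Mφ * Δt * ((S - 4 * a) * (Δx ^ 2)⁻¹ + f a) := by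
    rw [hscheme i j, div_eq_mul_inv]
  rw [hval]
  -- key products
  have p1 : Mφ * Δt * (Δx ^ 2)⁻¹ * (S - 4 * a) ≥ Mφ * Δt * (Δx ^ 2)⁻¹ * (-4 * a) :=
    mul_le_mul_of_nonneg_left (by linarith) hce.le
  have p2 : Mφ * Δt * (Δx ^ 2)⁻¹ * (S - 4 * a) ≤ Mφ * Δt * (Δx ^ 2)⁻¹ * (4 - 4 * a) :=
    mul_le_mul_of_nonneg_left (by linarith) hce.le
  have p3 : Mφ * Δt * f a ≥ Mφ * Δt * (-(L * a)) := mul_le_mul_of_nonneg_left hfl hc.le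
  have p4 : Mφ * Δt * f a ≤ Mφ * Δt * (L * (1 - a)) := mul_le_mul_of_nonneg_left hfu hc.le
  -- lower: φ' ≥ a * (1 - c*(4e + L)) ≥ 0 ; upper: 1 - φ' ≥ (1-a)*(1 - c*(4e+L)) ≥ 0
  have q1 : 0 ≤ a * (1 - (Mφ * Δt * (4 * (Δx ^ 2)⁻¹) + Mφ * Δt * L)) :=
    mul_nonneg ha0 (by linarith)
  have q2 : 0 ≤ (1 - a) * (1 - (Mφ * Δt * (4 * (Δx ^ 2)⁻¹) + Mφ * Δt * L)) :=
    mul_nonneg (by linarith) (by linarith)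
  constructor
  · linarith [p1, p3, q1]
  · linarith [p2, p4, q2]
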